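/- Let S be a closed, convex and bounded subset of ℝⁿ and g : ℝⁿ → ℝ a convex function. Then there exist ℓ ≥ 0, λ₀ ∈ (0,1) and a constant C > 0 such that for all λ ∈ (0, λ₀): (i) the Moreau envelope M_λg is ℓ-Lipschitz on S, and (ii) sup_{x ∈ S} |M_λg(x) − g(x)| ≤ ℓ·√λ·C. (Uniform approximation on bounded sets, Proposition 2.2.) -/

import Mathlib

open Filter Topology

/-- The Moreau envelope of `g : H → ℝ` with parameter `lam`. -/
noncomputable def moreauEnv {H : Type*} [NormedAddCommGroup H] [InnerProductSpace ℝ H]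
    (g : H → ℝ) (lam : ℝ) (x : H) : ℝ :=
  ⨅ z : H, (g z + ‖x - z‖ ^ 2 / (2 * lam))

section Aux

variable {E : Type*} [NormedAddCommGroup E] [NormedSpace ℝ E]

/-- Convex functions bounded on a ball decay at most linearly. -/
lemma aux_low {g : E → ℝ} (hg : ConvexOn ℝ Set.univ g) {M R : ℝ} (hM0 : 0 ≤ M)
    (hMb : ∀ z : E, ‖z‖ ≤ R + 1 → |g z| ≤ M) :
    ∀ y : E, ‖y‖ ≤ R → ∀ z : E, g y - 2*M*‖z - y‖ - 2*M ≤ g z := by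
  intro y hy z
  rcases le_or_gt ‖z - y‖ 1 with ht | ht
  · have hzb : ‖z‖ ≤ R + 1 := by
      have h1 : ‖z‖ ≤ ‖z - y‖ + ‖y‖ := by
        have := norm_add_le (z - y) y
        simpa using this
      linarith
    have h2 := abs_le.mp (hMb z hzb)
    have h3 := abs_le.mp (hMb y (by linarith))
    nlinarith [norm_nonneg (z - y)]
  · set t := ‖z - y‖ with htdef
    have ht0 : (0:ℝ) < t := lt_trans one_pos ht
    set b : ℝ := 1 / t with hbdef
    have hb : 0 < b := by positivity
    have hb1 : b ≤ 1 := by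
      rw [hbdef, div_le_one ht0]; exact ht.le
    have hab : (1 - b) + b = 1 := by ring
    have hcomb := hg.2 (Set.mem_univ y) (Set.mem_univ z) (by linarith) hb.le hab
    have hu : (1 - b) • y + b • z = y + b • (z - y) := by
      rw [sub_smul, one_smul, smul_sub]; abel
    rw [hu, smul_eq_mul, smul_eq_mul] at hcomb
    have huN : ‖y + b • (z - y)‖ ≤ R + 1 := by
      have h1 : ‖b • (z - y)‖ = 1 := by
        rw [norm_smul, Real.norm_eq_abs, abs_of_pos hb, hbdef]
        field_simp
        exact htdef.symm
      calc ‖y + b • (z - y)‖ ≤ ‖y‖ + ‖b • (z - y)‖ := norm_add_le _ _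
        _ ≤ R + 1 := by rw [h1]; linarith
    have h1 := abs_le.mp (hMb _ huN)
    have h2 := abs_le.mp (hMb y (by linarith))
    have hbt : b * t = 1 := by rw [hbdef]; field_simp
    nlinarith [mul_le_mul_of_nonneg_left hcomb ht0.le, mul_le_mul_of_nonneg_left h1.1 ht0.le,
      mul_le_mul_of_nonneg_left h2.2 (sub_nonneg.mpr ht.le)]

/-- The distance bound on approximate minimizers. -/
lemma aux_tle {M lam t : ℝ} (hM0 : 0 ≤ M) (hl : 0 < lam)
    (hll : lam < 1 / (8 * (2*M + 1))) (ht0 : 0 ≤ t)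
    (h4 : t ^ 2 < 2 * lam * (2*M*t + 2*M + 1)) : t ≤ 1 := by
  have h5 : lam * (8 * (2*M + 1)) < 1 := by
    rw [lt_div_iff₀ (by positivity)] at hll; linarith
  by_contra hcon
  push_neg at hcon
  nlinarith [mul_pos hl (sub_pos.mpr hcon), mul_nonneg hM0 ht0,
    mul_lt_mul_of_pos_right h5 (lt_trans one_pos hcon),
    mul_nonneg (mul_nonneg hl.le hM0) (sub_pos.mpr hcon).le]

end Aux

section AuxEnv

variable {H : Type*} [NormedAddCommGroup H] [InnerProductSpace ℝ H]

/-- The Moreau envelope is bounded above by each trial value. -/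
lemma aux_envle {g : H → ℝ} {M R : ℝ} (hM0 : 0 ≤ M)
    (hlow : ∀ y : H, ‖y‖ ≤ R → ∀ z : H, g y - 2*M*‖z - y‖ - 2*M ≤ g z)
    {x : H} (hx : ‖x‖ ≤ R) {lam : ℝ} (hl : 0 < lam) (z : H) :
    moreauEnv g lam x ≤ g z + ‖x - z‖ ^ 2 / (2 * lam) := by
  refine ciInf_le ⟨g x - 2*M - 2*M^2*lam, ?_⟩ z
  rintro v ⟨w, rfl⟩
  have h1 := hlow x hx w
  have hrev : ‖x - w‖ = ‖w - x‖ := norm_sub_rev _ _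
  have h2 : 2*M*‖w - x‖ - 2*M^2*lam ≤ ‖w - x‖ ^ 2 / (2 * lam) := by
    rw [le_div_iff₀ (by positivity)]
    nlinarith [sq_nonneg (‖w - x‖ - 2*M*lam)]
  simp only [hrev]
  linarith

lemma aux_envle_self {g : H → ℝ} {M R : ℝ} (hM0 : 0 ≤ M)
    (hlow : ∀ y : H, ‖y‖ ≤ R → ∀ z : H, g y - 2*M*‖z - y‖ - 2*M ≤ g z)
    {x : H} (hx : ‖x‖ ≤ R) {lam : ℝ} (hl : 0 < lam) :
    moreauEnv g lam x ≤ g x := by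
  have := aux_envle hM0 hlow hx hl x
  simpa using this

/-- Approximate minimizers exist and lie within distance 1. -/
lemma aux_near {g : H → ℝ} {M R : ℝ} (hM0 : 0 ≤ M)
    (hlow : ∀ y : H, ‖y‖ ≤ R → ∀ z : H, g y - 2*M*‖z - y‖ - 2*M ≤ g z)
    {x : H} (hx : ‖x‖ ≤ R) {lam : ℝ} (hl : 0 < lam) (hll : lam < 1 / (8 * (2*M + 1)))
    {ε : ℝ} (hε : 0 < ε) (hε1 : ε ≤ 1) :
    ∃ z : H, g z + ‖x - z‖ ^ 2 / (2 * lam) < moreauEnv g lam x + ε ∧ ‖x - z‖ ≤ 1 := by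
  obtain ⟨z, hz⟩ : ∃ z : H, g z + ‖x - z‖ ^ 2 / (2 * lam) < moreauEnv g lam x + ε :=
    exists_lt_of_ciInf_lt (lt_add_of_pos_right _ hε)
  refine ⟨z, hz, ?_⟩
  have ht0 : 0 ≤ ‖x - z‖ := norm_nonneg _
  have h1 : g x - 2*M*‖x - z‖ - 2*M ≤ g z := by
    have := hlow x hx z
    rwa [← norm_sub_rev x z] at this
  have hMx := aux_envle_self hM0 hlow hx hl
  have h3 : ‖x - z‖ ^ 2 / (2 * lam) < 2*M*‖x - z‖ + 2*M + 1 := by linarith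
  have h4 : ‖x - z‖ ^ 2 < 2 * lam * (2*M*‖x - z‖ + 2*M + 1) := by
    rw [div_lt_iff₀ (by positivity)] at h3; linarith
  exact aux_tle hM0 hl hll ht0 h4

/-- One-sided Lipschitz estimate for the Moreau envelope. -/
lemma aux_A {g : H → ℝ} {M R L : ℝ} (hM0 : 0 ≤ M) (hR0 : 0 ≤ R) (hL0 : 0 ≤ L)
    (hlow : ∀ y : H, ‖y‖ ≤ R → ∀ z : H, g y - 2*M*‖z - y‖ - 2*M ≤ g z)
    (hLip : ∀ w z : H, ‖w‖ ≤ 3*R + 2 → ‖z‖ ≤ 3*R + 2 → |g w - g z| ≤ L * ‖w - z‖)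
    {lam : ℝ} (hl : 0 < lam) (hll : lam < 1 / (8 * (2*M + 1)))
    {x y : H} (hx : ‖x‖ ≤ R) (hy : ‖y‖ ≤ R) :
    moreauEnv g lam x - moreauEnv g lam y ≤ L * ‖x - y‖ := by
  rw [sub_le_iff_le_add, add_comm]
  refine le_of_forall_pos_le_add fun ε hε => ?_
  obtain ⟨z, hz1, hz2⟩ := aux_near hM0 hlow hy hl hll (lt_min hε one_pos) (min_le_right ε 1)
  have hzn : ‖z‖ ≤ R + 1 := by
    have h1 : ‖z‖ = ‖y - (y - z)‖ := by rw [sub_sub_cancel]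
    have h2 := norm_sub_le y (y - z)
    rw [← h1] at h2
    linarith
  have hwz : (z + x - y) - z = x - y := by abel
  have hxw : x - (z + x - y) = y - z := by abel
  have hwn : ‖z + x - y‖ ≤ 3*R + 2 := by
    have h1 : ‖z + x - y‖ ≤ ‖z‖ + ‖x - y‖ := by
      rw [add_sub_assoc]; exact norm_add_le _ _
    have h2 : ‖x - y‖ ≤ ‖x‖ + ‖y‖ := norm_sub_le _ _
    linarith
  have hzn' : ‖z‖ ≤ 3*R + 2 := by linarith
  have hgwz : |g (z + x - y) - g z| ≤ L * ‖x - y‖ := by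
    have := hLip (z + x - y) z hwn hzn'
    rwa [hwz] at this
  have hgw := (abs_le.mp hgwz).2
  have step1 : moreauEnv g lam x ≤ g (z + x - y) + ‖x - (z + x - y)‖ ^ 2 / (2 * lam) :=
    aux_envle hM0 hlow hx hl _
  rw [hxw] at step1
  have hεle : min ε 1 ≤ ε := min_le_left _ _
  linarith

/-- Approximation estimate for the Moreau envelope. -/
lemma aux_B {g : H → ℝ} {M R L : ℝ} (hM0 : 0 ≤ M) (hR0 : 0 ≤ R) (hL0 : 0 ≤ L)
    (hlow : ∀ y : H, ‖y‖ ≤ R → ∀ z : H, g y - 2*M*‖z - y‖ - 2*M ≤ g z)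
    (hLip : ∀ w z : H, ‖w‖ ≤ 3*R + 2 → ‖z‖ ≤ 3*R + 2 → |g w - g z| ≤ L * ‖w - z‖)
    {lam : ℝ} (hl : 0 < lam) (hll : lam < 1 / (8 * (2*M + 1)))
    {x : H} (hx : ‖x‖ ≤ R) :
    g x - moreauEnv g lam x ≤ lam * L ^ 2 / 2 := by
  rw [sub_le_iff_le_add, add_comm]
  refine le_of_forall_pos_le_add fun ε hε => ?_
  obtain ⟨z, hz1, hz2⟩ := aux_near hM0 hlow hx hl hll (lt_min hε one_pos) (min_le_right ε 1)
  have hzn : ‖z‖ ≤ R + 1 := by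
    have h1 : ‖z‖ = ‖x - (x - z)‖ := by rw [sub_sub_cancel]
    have h2 := norm_sub_le x (x - z)
    rw [← h1] at h2
    linarith
  have hgxz : |g x - g z| ≤ L * ‖x - z‖ :=
    hLip x z (by linarith) (by linarith)
  have key : L * ‖x - z‖ - lam * L ^ 2 / 2 ≤ ‖x - z‖ ^ 2 / (2 * lam) := by
    rw [le_div_iff₀ (by positivity)]
    nlinarith [sq_nonneg (‖x - z‖ - lam * L)]
  have h1 := (abs_le.mp hgxz).2
  have hεle : min ε 1 ≤ ε := min_le_left _ _
  linarith

end AuxEnv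

/-- Uniform approximation of a convex function by its Moreau envelope on bounded sets
(Proposition 2.2): for `S ⊆ ℝⁿ` closed, convex and bounded and `g : ℝⁿ → ℝ` convex,
there are `ℓ ≥ 0`, `λ₀ ∈ (0,1)` and `C > 0` such that for all `λ ∈ (0, λ₀)` the Moreau
envelope `M_λ g` is `ℓ`-Lipschitz on `S` and `sup_{x ∈ S} |M_λ g x − g x| ≤ ℓ √λ C`. -/
theorem stmt1 {n : ℕ} (S : Set (EuclideanSpace ℝ (Fin n)))
    (hScl : IsClosed S) (hSconv : Convex ℝ S) (hSbd : Bornology.IsBounded S)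
    (g : EuclideanSpace ℝ (Fin n) → ℝ) (hg : ConvexOn ℝ Set.univ g) :
    ∃ ℓ : ℝ, 0 ≤ ℓ ∧ ∃ lam₀ ∈ Set.Ioo (0 : ℝ) 1, ∃ C > (0 : ℝ),
      ∀ lam ∈ Set.Ioo (0 : ℝ) lam₀,
        (∀ x ∈ S, ∀ y ∈ S, |moreauEnv g lam x - moreauEnv g lam y| ≤ ℓ * ‖x - y‖) ∧
        (∀ x ∈ S, |moreauEnv g lam x - g x| ≤ ℓ * Real.sqrt lam * C) := by
  classical
  -- a radius bound for S
  obtain ⟨R, hR0, hSR⟩ : ∃ R : ℝ, 0 ≤ R ∧ ∀ x ∈ S, ‖x‖ ≤ R := by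
    obtain ⟨R₀, hR₀⟩ := hSbd.subset_closedBall 0
    refine ⟨max R₀ 0, le_max_right _ _, fun x hx => ?_⟩
    have h := hR₀ hx
    rw [Metric.mem_closedBall, dist_zero_right] at h
    exact h.trans (le_max_left _ _)
  -- continuity of g
  have hgc : Continuous g := by
    rw [← continuousOn_univ]
    exact hg.continuousOn isOpen_univ
  -- bound M for |g| on closedBall 0 (R+1)
  obtain ⟨M, hM0, hMb⟩ : ∃ M : ℝ, 0 ≤ M ∧
      ∀ z : EuclideanSpace ℝ (Fin n), ‖z‖ ≤ R + 1 → |g z| ≤ M := by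
    obtain ⟨M₀, hM₀⟩ :=
      (isCompact_closedBall (0 : EuclideanSpace ℝ (Fin n)) (R + 1)).exists_bound_of_continuousOn
        hgc.continuousOn
    refine ⟨max M₀ 0, le_max_right _ _, fun z hz => ?_⟩
    have h := hM₀ z (by rwa [Metric.mem_closedBall, dist_zero_right])
    rw [Real.norm_eq_abs] at h
    exact h.trans (le_max_left _ _)
  have hlow := aux_low hg hM0 hMb
  -- Lipschitz constant for g on a big ball
  obtain ⟨L, hL0, hLip⟩ : ∃ L : ℝ, 0 ≤ L ∧ ∀ w z : EuclideanSpace ℝ (Fin n),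
      ‖w‖ ≤ 3*R + 2 → ‖z‖ ≤ 3*R + 2 → |g w - g z| ≤ L * ‖w - z‖ := by
    have hball : ConvexOn ℝ (Metric.ball (0 : EuclideanSpace ℝ (Fin n)) (3*R + 4)) g :=
      hg.subset (Set.subset_univ _) (convex_ball _ _)
    obtain ⟨K, hK⟩ := hball.exists_lipschitzOnWith_of_isBounded
      (show (3*R + 3 : ℝ) < 3*R + 4 by linarith)
      ((((isCompact_closedBall (0 : EuclideanSpace ℝ (Fin n)) (3*R + 4)).image hgc).isBounded).subset
        (Set.image_mono Metric.ball_subset_closedBall))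
    refine ⟨(K : ℝ), K.coe_nonneg, fun w z hw hz => ?_⟩
    have hw' : w ∈ Metric.ball (0 : EuclideanSpace ℝ (Fin n)) (3*R + 3) := by
      rw [Metric.mem_ball, dist_zero_right]; linarith
    have hz' : z ∈ Metric.ball (0 : EuclideanSpace ℝ (Fin n)) (3*R + 3) := by
      rw [Metric.mem_ball, dist_zero_right]; linarith
    have := hK.dist_le_mul w hw' z hz'
    rwa [Real.dist_eq, dist_eq_norm] at this
  have hlam₀pos : (0:ℝ) < 1 / (8 * (2*M + 1)) := by positivity
  have hlam₀lt1 : 1 / (8 * (2*M + 1)) < (1:ℝ) := by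
    rw [div_lt_one (by positivity)]; linarith
  refine ⟨L + 1, by linarith, 1 / (8 * (2*M + 1)), ⟨hlam₀pos, hlam₀lt1⟩, (L + 1) / 2,
    by positivity, ?_⟩
  rintro lam ⟨hl, hll⟩
  constructor
  · intro x hx y hy
    rw [abs_sub_le_iff]
    have hnn : (0:ℝ) ≤ ‖x - y‖ := norm_nonneg _
    constructor
    · exact (aux_A hM0 hR0 hL0 hlow hLip hl hll (hSR x hx) (hSR y hy)).trans (by nlinarith)
    · have h := aux_A hM0 hR0 hL0 hlow hLip hl hll (hSR y hy) (hSR x hx)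
      rw [norm_sub_rev] at h
      exact h.trans (by nlinarith)
  · intro x hx
    have h1 : moreauEnv g lam x ≤ g x := aux_envle_self hM0 hlow (hSR x hx) hl
    have h2 := aux_B hM0 hR0 hL0 hlow hLip hl hll (hSR x hx)
    rw [abs_sub_comm, abs_of_nonneg (by linarith)]
    have hsq : lam ≤ Real.sqrt lam := by
      have hl1 : lam < 1 := lt_trans hll hlam₀lt1
      have h3 : Real.sqrt (lam ^ 2) ≤ Real.sqrt lam := Real.sqrt_le_sqrt (by nlinarith)
      rwa [Real.sqrt_sq hl.le] at h3
    have hs0 : 0 ≤ Real.sqrt lam := Real.sqrt_nonneg _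
    have e1 : lam * L ^ 2 ≤ Real.sqrt lam * L ^ 2 :=
      mul_le_mul_of_nonneg_right hsq (sq_nonneg L)
    have e2 : Real.sqrt lam * L ^ 2 ≤ Real.sqrt lam * (L + 1) ^ 2 := by
      have h4 : L ^ 2 ≤ (L + 1) ^ 2 := by nlinarith
      exact mul_le_mul_of_nonneg_left h4 hs0
    calc g x - moreauEnv g lam x ≤ lam * L ^ 2 / 2 := h2
      _ ≤ Real.sqrt lam * (L + 1) ^ 2 / 2 := by linarith
      _ = (L + 1) * Real.sqrt lam * ((L + 1) / 2) := by ring
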